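/- Let A be a Noetherian integral domain of finite Krull dimension, M a nonzero finitely generated torsion-free A-module, and B a commutative A-subalgebra of the endomorphism algebra End_A(M). Then B is finitely generated and torsion-free as an A-module; consequently B is equidimensional of Krull dimension equal to that of A (every quotient of B by a minimal prime has Krull dimension equal to dim A) and B has no embedded primes (every associated prime of the B-module B is a minimal prime). -/

import Mathlib

open Ideal

/-- Every element of a minimal prime is "almost nilpotent": some power of it is
killed by an element outside the prime. -/
lemma aux_min_zero {B : Type*} [CommRing B] {𝔮 : Ideal B} (h𝔮 : 𝔮 ∈ minimalPrimes B)
    {b : B} (hb : b ∈ 𝔮) : ∃ s ∉ 𝔮, ∃ n : ℕ, s * b ^ n = 0 := by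
  haveI : 𝔮.IsPrime := h𝔮.1.1
  have hx : algebraMap B (Localization 𝔮.primeCompl) b ∈
      IsLocalRing.maximalIdeal (Localization 𝔮.primeCompl) :=
    (IsLocalization.AtPrime.to_map_mem_maximal_iff _ 𝔮 b).mpr hb
  haveI : Ring.KrullDimLE 0 (Localization 𝔮.primeCompl) :=
    Ring.KrullDimLE.of_isLocalization 𝔮 h𝔮 _
  obtain ⟨n, hn⟩ := Ring.KrullDimLE.isNilpotent_iff_mem_maximalIdeal.mpr hx
  rw [← map_pow] at hn
  obtain ⟨m, hm⟩ := (IsLocalization.map_eq_zero_iff 𝔮.primeCompl _ _).mp hn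
  exact ⟨(m : B), m.2, n, hm⟩

/-- Krull dimension is preserved by injective integral extensions. -/
lemma aux_dim {A C : Type*} [CommRing A] [CommRing C] [Algebra A C]
    [Algebra.IsIntegral A C] [Nontrivial C]
    (hinj : Function.Injective (algebraMap A C)) :
    ringKrullDim C = ringKrullDim A := by
  apply le_antisymm
  · refine Order.krullDim_le_of_strictMono (PrimeSpectrum.comap (algebraMap A C)) ?_
    intro p q hpq
    obtain ⟨x, hxq, hxp⟩ := SetLike.exists_of_lt (show p.asIdeal < q.asIdeal from hpq)
    exact Ideal.comap_lt_comap_of_integral_mem_sdiff (le_of_lt hpq) ⟨hxq, hxp⟩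
      (Algebra.IsIntegral.isIntegral x)
  · -- lift chains using going-up
    have lift : ∀ n : ℕ, ∀ p : LTSeries (PrimeSpectrum A), p.length = n →
        ∃ q : LTSeries (PrimeSpectrum C), q.length = n ∧
          (q.last).asIdeal.comap (algebraMap A C) = (p.last).asIdeal := by
      intro n
      induction n with
      | zero =>
        intro p _
        haveI := p.last.isPrime
        obtain ⟨Q, -, hQprime, hQcomap⟩ :=
          Ideal.exists_ideal_over_prime_of_isIntegral (p.last).asIdeal ⊥
            (by
              intro x hx
              have : algebraMap A C x = 0 := by simpa using hx
              have : x = 0 := hinj (by simpa using this)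
              simp [this])
        exact ⟨RelSeries.singleton _ ⟨Q, hQprime⟩, rfl, by simpa using hQcomap⟩
      | succ n ih =>
        intro p hp
        obtain ⟨q', hq'len, hq'last⟩ := ih p.eraseLast (by simp [hp])
        have hrel : p.eraseLast.last < p.last :=
          p.eraseLast_last_rel_last (by omega)
        haveI := p.last.isPrime
        obtain ⟨Q, hQge, hQprime, hQcomap⟩ :=
          Ideal.exists_ideal_over_prime_of_isIntegral (p.last).asIdeal (q'.last).asIdeal
            (by rw [hq'last]; exact le_of_lt hrel)
        have hlt : q'.last < (⟨Q, hQprime⟩ : PrimeSpectrum C) := by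
          refine lt_of_le_of_ne hQge ?_
          intro h
          have : (q'.last).asIdeal.comap (algebraMap A C) = Q.comap (algebraMap A C) := by
            rw [h]
          rw [hq'last, hQcomap] at this
          exact (ne_of_lt hrel) (PrimeSpectrum.ext this)
        refine ⟨q'.snoc ⟨Q, hQprime⟩ hlt, by simpa using hq'len, ?_⟩
        rw [RelSeries.last_snoc]
        exact hQcomap
    refine iSup_le fun p => ?_
    obtain ⟨q, hqlen, -⟩ := lift p.length p rfl
    rw [← hqlen]
    exact Order.LTSeries.length_le_krullDim q

/-- Let `A` be a Noetherian integral domain of finite Krull dimension,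
`M` a nonzero finitely generated torsion-free `A`-module, and `B` a commutative
`A`-subalgebra of `End_A(M)` (formalized as a commutative `A`-algebra together with an
injective `A`-algebra homomorphism into `Module.End A M`).  Then `B` is finitely generated
and torsion-free as an `A`-module; consequently `B` is equidimensional of Krull dimension
equal to that of `A` and has no embedded primes. -/
theorem stmt_2 (A : Type*) [CommRing A] [IsDomain A] [IsNoetherianRing A]
    (hA : ringKrullDim A < ⊤)
    (M : Type*) [AddCommGroup M] [Module A M] [Nontrivial M] [Module.Finite A M]
    (htfM : ∀ a : A, a ≠ 0 → ∀ x : M, a • x = 0 → x = 0)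
    (B : Type*) [CommRing B] [Algebra A B]
    (f : B →ₐ[A] Module.End A M) (hf : Function.Injective f) :
    Module.Finite A B ∧
    (∀ a : A, a ≠ 0 → ∀ x : B, a • x = 0 → x = 0) ∧
    (∀ 𝔮 ∈ minimalPrimes B, ringKrullDim (B ⧸ 𝔮) = ringKrullDim A) ∧
    (∀ 𝔭 ∈ associatedPrimes B B, 𝔭 ∈ minimalPrimes B) := by
  -- `B` is a finite `A`-module
  haveI : IsNoetherian A M := isNoetherian_of_isNoetherianRing_of_finite A M
  haveI : IsNoetherian A (Module.End A M) := isNoetherian_linearMap A M M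
  haveI hfin : Module.Finite A B := Module.Finite.of_injective f.toLinearMap hf
  -- `B` is torsion-free
  have htfB : ∀ a : A, a ≠ 0 → ∀ x : B, a • x = 0 → x = 0 := by
    intro a ha x hx
    apply hf
    rw [map_zero]
    have h1 : a • f x = 0 := by rw [← map_smul f a x, hx, map_zero]
    ext m
    have h2 : a • (f x m) = 0 := by
      have := congrArg (fun φ : Module.End A M => φ m) h1
      simpa using this
    simpa using htfM a ha _ h2
  refine ⟨hfin, htfB, ?_⟩
  by_cases hBtriv : Subsingleton B
  · constructor
    · intro 𝔮 h𝔮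
      haveI : 𝔮.IsPrime := h𝔮.1.1
      exact absurd (Subsingleton.elim (1 : B) 0 ▸ 𝔮.zero_mem : (1 : B) ∈ 𝔮)
        (fun h => this.ne_top (𝔮.eq_top_iff_one.mpr h))
    · intro 𝔭 h𝔭
      exact absurd h𝔭 (by rw [associatedPrimes.eq_empty_of_subsingleton]; simp)
  · haveI : Nontrivial B := not_subsingleton_iff_nontrivial.mp hBtriv
    haveI hint : Algebra.IsIntegral A B := Algebra.IsIntegral.of_finite A B
    -- every prime of `B` contracting to `⊥` is minimal
    have key : ∀ 𝔭 : Ideal B, 𝔭.IsPrime → 𝔭.comap (algebraMap A B) = ⊥ →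
        𝔭 ∈ minimalPrimes B := by
      intro 𝔭 h𝔭 hcomap
      haveI := h𝔭
      obtain ⟨𝔮, h𝔮min, h𝔮le⟩ := Ideal.exists_minimalPrimes_le (bot_le : ⊥ ≤ 𝔭)
      rcases eq_or_lt_of_le h𝔮le with rfl | hlt
      · exact h𝔮min
      · exfalso
        haveI : 𝔮.IsPrime := h𝔮min.1.1
        obtain ⟨x, hx𝔭, hx𝔮⟩ := SetLike.exists_of_lt hlt
        have hcc := Ideal.comap_lt_comap_of_integral_mem_sdiff (R := A) h𝔮le ⟨hx𝔭, hx𝔮⟩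
          (Algebra.IsIntegral.isIntegral (R := A) x)
        rw [hcomap] at hcc
        exact not_lt_bot hcc
    -- every minimal prime of `B` contracts to `⊥`
    have mincomap : ∀ 𝔮 ∈ minimalPrimes B, 𝔮.comap (algebraMap A B) = ⊥ := by
      intro 𝔮 h𝔮
      refine le_antisymm ?_ bot_le
      intro a ha
      rw [Ideal.mem_comap] at ha
      obtain ⟨s, hs, n, hsn⟩ := aux_min_zero h𝔮 ha
      by_contra hane
      have ha0 : a ≠ 0 := by simpa using hane
      have : (a ^ n) • s = 0 := by
        rw [Algebra.smul_def, map_pow, mul_comm]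
        exact hsn
      have hs0 : s = 0 := htfB (a ^ n) (pow_ne_zero n ha0) s this
      exact hs (hs0 ▸ 𝔮.zero_mem)
    constructor
    · -- equidimensionality
      intro 𝔮 h𝔮
      haveI : 𝔮.IsPrime := h𝔮.1.1
      haveI : Nontrivial (B ⧸ 𝔮) := Ideal.Quotient.nontrivial_iff.mpr (Ideal.IsPrime.ne_top ‹_›)
      haveI : Algebra.IsIntegral A (B ⧸ 𝔮) := by
        constructor
        intro x
        obtain ⟨b, rfl⟩ := Ideal.Quotient.mkₐ_surjective A 𝔮 x
        exact (hint.isIntegral b).map (Ideal.Quotient.mkₐ A 𝔮)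
      have hinj : Function.Injective (algebraMap A (B ⧸ 𝔮)) := by
        rw [injective_iff_map_eq_zero]
        intro a ha
        rw [IsScalarTower.algebraMap_apply A B (B ⧸ 𝔮), Ideal.Quotient.algebraMap_eq,
          Ideal.Quotient.eq_zero_iff_mem] at ha
        have : a ∈ 𝔮.comap (algebraMap A B) := ha
        rw [mincomap 𝔮 h𝔮] at this
        simpa using this
      exact aux_dim hinj
    · -- no embedded primes
      intro 𝔭 h𝔭
      obtain ⟨hprime, x, hx⟩ := h𝔭
      have hxne : x ≠ 0 := by
        rintro rfl
        apply hprime.ne_top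
        rw [hx, eq_top_iff]
        intro b _
        exact Ideal.le_radical (by simp [Submodule.mem_colon_singleton])
      refine key 𝔭 hprime (le_antisymm ?_ bot_le)
      intro a ha
      rw [Ideal.mem_comap, hx] at ha
      obtain ⟨n, hn⟩ := ha
      rw [← map_pow, Submodule.mem_colon_singleton] at hn
      have h0 : algebraMap A B (a ^ n) • x = 0 := by simpa using hn
      have : (a ^ n) • x = 0 := by
        rw [Algebra.smul_def]
        simpa using h0
      by_contra hane
      have ha0 : a ≠ 0 := by simpa using hane
      exact hxne (htfB (a ^ n) (pow_ne_zero n ha0) x this)
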